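/- Two LPODs P1 and P2 are strongly equivalent under the most-preferred answer sets if and only if they are strongly equivalent under all the answer sets. -/
import Mathlib


/-- The four truth values F < F* < T* < T. -/
inductive V where
  | F | Fs | Ts | T
  deriving DecidableEq, Repr

def V.toNat : V → ℕ
  | .F => 0
  | .Fs => 1
  | .Ts => 2
  | .T => 3

instance : LinearOrder V :=
  LinearOrder.lift' V.toNat (by intro a b; cases a <;> cases b <;> simp [V.toNat])

/-- An LPOD rule `hd × hds(1) × ⋯ × hds(k) ← pos(1) ∧ ⋯ ∧ not neg(1) ∧ ⋯`. -/
structure Rule where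
  hd : ℕ
  hds : List ℕ
  pos : List ℕ
  neg : List ℕ
  deriving DecidableEq, Repr

/-- Value of an ordered disjunction `c × cs(1) × ⋯ × cs(k)` of atoms. -/
def evalHead (I : ℕ → V) : ℕ → List ℕ → V
  | c, [] => I c
  | c, c' :: cs => if I c = V.Fs then evalHead I c' cs else I c

/-- Value of `not φ` given the value of `φ`. -/
def evalNot (v : V) : V := if v ≤ V.Fs then V.T else V.F

/-- Value of the body of a rule (the empty body evaluates to `T`). -/
def evalBody (I : ℕ → V) (r : Rule) : V :=
  ((r.pos.map I) ++ (r.neg.map (fun b => evalNot (I b)))).foldr min V.T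

/-- A rule evaluates to `T` under `I` (i.e. `I(head) ≥ I(body)`). -/
def Rule.sat (I : ℕ → V) (r : Rule) : Prop :=
  evalBody I r ≤ evalHead I r.hd r.hds

/-- An LPOD: a finite set of rules. -/
abbrev Program := Finset Rule

def isModel (I : ℕ → V) (P : Program) : Prop := ∀ r ∈ P, r.sat I

/-- Logical equivalence in the four-valued logic: same models. -/
def logEquiv (P1 P2 : Program) : Prop := ∀ I : ℕ → V, isModel I P1 ↔ isModel I P2

def Rule.atoms (r : Rule) : Finset ℕ :=
  {r.hd} ∪ r.hds.toFinset ∪ r.pos.toFinset ∪ r.neg.toFinset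

/-- The atoms occurring in a program. -/
def progAtoms (P : Program) : Finset ℕ := P.biUnion Rule.atoms

/-- The ordering `⪯` on truth values: reflexive closure of
    `F ≺ F*`, `F ≺ T*`, `F ≺ T`, `T* ≺ T`. -/
def V.pre (v1 v2 : V) : Prop :=
  v1 = v2 ∨ (v1 = V.F ∧ v2 ≠ V.F) ∨ (v1 = V.Ts ∧ v2 = V.T)

/-- `I1 ⪯ I2` relative to the atoms of `P`. -/
def interpLe (P : Program) (I1 I2 : ℕ → V) : Prop :=
  ∀ A ∈ progAtoms P, V.pre (I1 A) (I2 A)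

/-- `I` is solid for `P`: no atom of `P` gets the value `T*`. -/
def solid (P : Program) (I : ℕ → V) : Prop :=
  ∀ A ∈ progAtoms P, I A ≠ V.Ts

/-- An answer set of `P`: a `⪯`-minimal model of `P` that is solid. -/
def answerSet (P : Program) (M : ℕ → V) : Prop :=
  isModel M P ∧ solid P M ∧
    ∀ N : ℕ → V, isModel N P → interpLe P N M → interpLe P M N

/-- The atoms of `P` receiving the value `F*` under `M`. -/
def fstars (P : Program) (M : ℕ → V) : Finset ℕ :=
  (progAtoms P).filter (fun A => M A = V.Fs)

/-- A most-preferred answer set: `⊏`-minimal among the answer sets. -/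
def mostPreferred (P : Program) (M : ℕ → V) : Prop :=
  answerSet P M ∧ ∀ N : ℕ → V, answerSet P N → ¬ fstars P N ⊂ fstars P M

/-- Strong equivalence under the most-preferred answer sets. -/
def seMost (P1 P2 : Program) : Prop :=
  ∀ P : Program, ∀ M : ℕ → V, mostPreferred (P1 ∪ P) M ↔ mostPreferred (P2 ∪ P) M

/-- Strong equivalence under all the answer sets. -/
def seAll (P1 P2 : Program) : Prop :=
  ∀ P : Program, ∀ M : ℕ → V, answerSet (P1 ∪ P) M ↔ answerSet (P2 ∪ P) M

/-- A normal logic program: every rule has a single atom as head. -/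
def normalProg (P : Program) : Prop := ∀ r ∈ P, r.hds = []

/-- `X` is closed under the rules of the Gelfond–Lifschitz reduct `P^S`. -/
def reductClosed (P : Program) (S X : Set ℕ) : Prop :=
  ∀ r ∈ P, (∀ b ∈ r.neg, b ∉ S) → (∀ a ∈ r.pos, a ∈ X) → r.hd ∈ X

/-- `S` is a stable model (standard answer set): the least Herbrand model of `P^S`. -/
def stableModel (P : Program) (S : Set ℕ) : Prop :=
  reductClosed P S S ∧ ∀ X : Set ℕ, reductClosed P S X → S ⊆ X

/-- `I` is three-valued for `P`: no atom of `P` gets the value `F*`. -/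
def threeValued (P : Program) (I : ℕ → V) : Prop :=
  ∀ A ∈ progAtoms P, I A ≠ V.Fs

/- ===================== Auxiliary development ===================== -/

section Aux

instance : Fintype V := ⟨{V.F, V.Fs, V.Ts, V.T}, fun x => by cases x <;> simp⟩

instance (a b : V) : Decidable (V.pre a b) := by unfold V.pre; infer_instance

lemma V.le_top : ∀ x : V, x ≤ V.T := by decide
lemma V.top_le_iff : ∀ x : V, (V.T ≤ x ↔ x = V.T) := by decide
lemma V.pre_refl : ∀ x : V, V.pre x x := fun _ => Or.inl rfl
lemma V.pre_F : ∀ x : V, V.pre V.F x := by decide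
lemma V.pre_antisymm : ∀ x y : V, V.pre x y → V.pre y x → x = y := by decide
lemma V.pre_Fs_iff : ∀ x : V, (V.pre x V.Fs ↔ x = V.F ∨ x = V.Fs) := by decide
lemma V.not_pre_T_Ts : ¬ V.pre V.T V.Ts := by decide
lemma V.pre_Ts_T : V.pre V.Ts V.T := by decide
lemma V.not_pre_Fs_F : ¬ V.pre V.Fs V.F := by decide

/-- collapse `T*` to `T`. -/
def gg : V → V := fun v => if v = V.Ts then V.T else v

lemma gg_min : ∀ x y : V, gg (min x y) = min (gg x) (gg y) := by decide
lemma gg_mono : ∀ x y : V, x ≤ y → gg x ≤ gg y := by decide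
lemma gg_Fs : ∀ x : V, (gg x = V.Fs ↔ x = V.Fs) := by decide
lemma evalNot_gg : ∀ x : V, evalNot (gg x) = evalNot x := by decide
lemma gg_evalNot : ∀ x : V, gg (evalNot x) = evalNot x := by decide
lemma gg_T : gg V.T = V.T := by decide
lemma gg_ne_Ts : ∀ x : V, gg x ≠ V.Ts := by decide
lemma pre_gg_left : ∀ x y : V, V.pre x y → y ≠ V.Ts → V.pre (gg x) y := by decide
lemma gg_cases : ∀ x y : V, gg x = y → x ≠ y → (x = V.Ts ∧ y = V.T) := by decide

/- ---------- congruence lemmas ---------- -/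

lemma mem_atoms {r : Rule} {a : ℕ} :
    a ∈ r.atoms ↔ a = r.hd ∨ a ∈ r.hds ∨ a ∈ r.pos ∨ a ∈ r.neg := by
  simp [Rule.atoms, or_assoc]

lemma evalHead_congr : ∀ (c : ℕ) (cs : List ℕ) {I J : ℕ → V},
    (∀ a ∈ c :: cs, I a = J a) → evalHead I c cs = evalHead J c cs := by
  intro c cs
  induction cs generalizing c with
  | nil => intro I J h; simpa [evalHead] using h c (by simp)
  | cons d ds ih =>
    intro I J h
    have hc : I c = J c := h c (by simp)
    simp only [evalHead, hc]
    by_cases hF : J c = V.Fs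
    · rw [if_pos hF, if_pos hF]
      exact ih d (fun a ha => h a (by simp at ha ⊢; tauto))
    · rw [if_neg hF, if_neg hF]

lemma evalBody_congr {I J : ℕ → V} (r : Rule)
    (hp : ∀ a ∈ r.pos, I a = J a) (hn : ∀ a ∈ r.neg, I a = J a) :
    evalBody I r = evalBody J r := by
  unfold evalBody
  have h1 : r.pos.map I = r.pos.map J := List.map_congr_left hp
  have h2 : r.neg.map (fun b => evalNot (I b)) = r.neg.map (fun b => evalNot (J b)) :=
    List.map_congr_left (fun a ha => by rw [hn a ha])
  rw [h1, h2]

lemma Rule.sat_congr {I J : ℕ → V} {r : Rule} (h : ∀ a ∈ r.atoms, I a = J a) :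
    r.sat I ↔ r.sat J := by
  unfold Rule.sat
  rw [evalBody_congr r (fun a ha => h a (mem_atoms.mpr (Or.inr (Or.inr (Or.inl ha)))))
      (fun a ha => h a (mem_atoms.mpr (Or.inr (Or.inr (Or.inr ha))))),
    evalHead_congr r.hd r.hds (fun a ha => by
      rcases List.mem_cons.mp ha with h1 | h1
      · exact h a (mem_atoms.mpr (Or.inl h1))
      · exact h a (mem_atoms.mpr (Or.inr (Or.inl h1))))]

lemma mem_progAtoms {P : Program} {a : ℕ} :
    a ∈ progAtoms P ↔ ∃ r ∈ P, a ∈ r.atoms := by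
  simp [progAtoms]

lemma atoms_subset_progAtoms {P : Program} {r : Rule} (hr : r ∈ P) :
    r.atoms ⊆ progAtoms P := fun a ha => mem_progAtoms.mpr ⟨r, hr, ha⟩

lemma progAtoms_mono {P Q : Program} (h : P ⊆ Q) : progAtoms P ⊆ progAtoms Q := by
  intro a ha
  obtain ⟨r, hr, har⟩ := mem_progAtoms.mp ha
  exact mem_progAtoms.mpr ⟨r, h hr, har⟩

lemma progAtoms_union {P Q : Program} :
    progAtoms (P ∪ Q) = progAtoms P ∪ progAtoms Q := by
  ext a
  simp only [mem_progAtoms, Finset.mem_union]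
  constructor
  · rintro ⟨r, hr | hr, har⟩
    · exact Or.inl ⟨r, hr, har⟩
    · exact Or.inr ⟨r, hr, har⟩
  · rintro (⟨r, hr, har⟩ | ⟨r, hr, har⟩)
    · exact ⟨r, Or.inl hr, har⟩
    · exact ⟨r, Or.inr hr, har⟩

lemma isModel_congr {I J : ℕ → V} {P : Program}
    (h : ∀ a ∈ progAtoms P, I a = J a) : isModel I P ↔ isModel J P := by
  constructor <;> intro hm r hr
  · exact (Rule.sat_congr (fun a ha => h a (atoms_subset_progAtoms hr ha))).mp (hm r hr)
  · exact (Rule.sat_congr (fun a ha => h a (atoms_subset_progAtoms hr ha))).mpr (hm r hr)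

lemma isModel_union {I : ℕ → V} {P Q : Program} :
    isModel I (P ∪ Q) ↔ isModel I P ∧ isModel I Q := by
  constructor
  · intro h
    exact ⟨fun r hr => h r (Finset.mem_union_left _ hr),
           fun r hr => h r (Finset.mem_union_right _ hr)⟩
  · rintro ⟨h1, h2⟩ r hr
    rcases Finset.mem_union.mp hr with h | h
    · exact h1 r h
    · exact h2 r h

/- ---------- gg preserves models ---------- -/

lemma gg_foldr : ∀ l : List V, gg (l.foldr min V.T) = (l.map gg).foldr min V.T := by
  intro l
  induction l with
  | nil => simpa using gg_T
  | cons a l ih => simp [List.foldr_cons, gg_min, ih]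

lemma evalBody_gg (I : ℕ → V) (r : Rule) :
    evalBody (fun a => gg (I a)) r = gg (evalBody I r) := by
  unfold evalBody
  rw [gg_foldr, List.map_append, List.map_map, List.map_map]
  have h1 : List.map (fun a => gg (I a)) r.pos = List.map (gg ∘ I) r.pos := rfl
  have h2 : List.map (fun b => evalNot ((fun a => gg (I a)) b)) r.neg
      = List.map (gg ∘ fun b => evalNot (I b)) r.neg :=
    List.map_congr_left (fun a _ => by
      show evalNot (gg (I a)) = gg (evalNot (I a))
      exact (evalNot_gg (I a)).trans (gg_evalNot (I a)).symm)
  rw [h1, h2]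

lemma evalHead_gg (I : ℕ → V) : ∀ (c : ℕ) (cs : List ℕ),
    evalHead (fun a => gg (I a)) c cs = gg (evalHead I c cs) := by
  intro c cs
  induction cs generalizing c with
  | nil => simp [evalHead]
  | cons d ds ih =>
    by_cases h : I c = V.Fs
    · simp only [evalHead, h, if_pos rfl, (gg_Fs (I c)).mpr h, if_pos rfl]
      exact ih d
    · have : gg (I c) ≠ V.Fs := fun hc => h ((gg_Fs (I c)).mp hc)
      simp only [evalHead, if_neg h, if_neg this]

lemma isModel_gg {I : ℕ → V} {P : Program} (h : isModel I P) :
    isModel (fun a => gg (I a)) P := by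
  intro r hr
  have := h r hr
  unfold Rule.sat at this ⊢
  rw [evalBody_gg, evalHead_gg]
  exact gg_mono _ _ this

end Aux

/- ===================== gadget rules ===================== -/

section Gadget

def factR (a : ℕ) : Rule := ⟨a, [], [], []⟩
def ordR (a z : ℕ) : Rule := ⟨a, [z], [], []⟩
def gadR (a q : ℕ) : Rule := ⟨q, [], [a], [q]⟩

lemma atoms_factR {a b : ℕ} : b ∈ (factR a).atoms ↔ b = a := by
  simp [factR, mem_atoms]

lemma atoms_ordR {a z b : ℕ} : b ∈ (ordR a z).atoms ↔ b = a ∨ b = z := by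
  simp [ordR, mem_atoms]

lemma atoms_gadR {a q b : ℕ} : b ∈ (gadR a q).atoms ↔ b = q ∨ b = a := by
  simp [gadR, mem_atoms]; tauto

lemma sat_factR {I : ℕ → V} {a : ℕ} : (factR a).sat I ↔ I a = V.T := by
  have h1 : (factR a).sat I ↔ V.T ≤ I a := by
    simp [Rule.sat, factR, evalBody, evalHead]
  rw [h1, V.top_le_iff]

lemma sat_ordR {I : ℕ → V} {a z : ℕ} :
    (ordR a z).sat I ↔ ((I a = V.Fs ∧ I z = V.T) ∨ I a = V.T) := by
  have h1 : (ordR a z).sat I ↔ V.T ≤ (if I a = V.Fs then I z else I a) := by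
    simp [Rule.sat, ordR, evalBody, evalHead]
  rw [h1]
  by_cases h : I a = V.Fs
  · rw [if_pos h, V.top_le_iff]
    constructor
    · intro ht; exact Or.inl ⟨h, ht⟩
    · rintro (⟨_, hz⟩ | hT)
      · exact hz
      · rw [h] at hT; exact absurd hT (by decide)
  · rw [if_neg h, V.top_le_iff]
    constructor
    · intro ht; exact Or.inr ht
    · rintro (⟨hf, _⟩ | hT)
      · exact absurd hf h
      · exact hT

lemma gad_char : ∀ x y : V, (min x (min (evalNot y) V.T) ≤ y) ↔
    ((y = V.F ∧ x = V.F) ∨ (y = V.Fs ∧ (x = V.F ∨ x = V.Fs)) ∨ y = V.Ts ∨ y = V.T) := by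
  decide

lemma sat_gadR {I : ℕ → V} {a q : ℕ} :
    (gadR a q).sat I ↔
    ((I q = V.F ∧ I a = V.F) ∨ (I q = V.Fs ∧ (I a = V.F ∨ I a = V.Fs)) ∨
      I q = V.Ts ∨ I q = V.T) := by
  have h1 : (gadR a q).sat I ↔ min (I a) (min (evalNot (I q)) V.T) ≤ I q := by
    simp [Rule.sat, gadR, evalBody, evalHead]
  rw [h1, gad_char]

/- ===================== the pinning context ===================== -/

def Tset (W : ℕ → V) (U Δ : Finset ℕ) : Finset ℕ := (U \ Δ).filter (fun A => W A = V.T)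
def Sset (W : ℕ → V) (U Δ : Finset ℕ) : Finset ℕ := (U \ Δ).filter (fun A => W A = V.Fs)

def pinD (W : ℕ → V) (U Δ : Finset ℕ) (z : ℕ) (p : ℕ → ℕ) : Program :=
  insert (factR z)
    (((Tset W U Δ).image factR) ∪ ((Sset W U Δ).image (fun A => ordR A z)) ∪
      ((Sset W U Δ).image (fun A => gadR A (p A))))

/-- extend an interpretation to the fresh atoms. -/
def extI (W : ℕ → V) (U Δ : Finset ℕ) (z : ℕ) (p : ℕ → ℕ) (J : ℕ → V) : ℕ → V :=
  fun a => if a = z then V.T else if a ∈ (Sset W U Δ).image p then V.Fs else J a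

lemma mem_Tset {W U Δ} {a : ℕ} : a ∈ Tset W U Δ ↔ (a ∈ U ∧ a ∉ Δ) ∧ W a = V.T := by
  simp [Tset, Finset.mem_filter, Finset.mem_sdiff]

lemma mem_Sset {W U Δ} {a : ℕ} : a ∈ Sset W U Δ ↔ (a ∈ U ∧ a ∉ Δ) ∧ W a = V.Fs := by
  simp [Sset, Finset.mem_filter, Finset.mem_sdiff]

lemma mem_pinD {W U Δ z p} {r : Rule} :
    r ∈ pinD W U Δ z p ↔
      r = factR z ∨ (∃ A ∈ Tset W U Δ, r = factR A) ∨
      (∃ A ∈ Sset W U Δ, r = ordR A z) ∨ (∃ A ∈ Sset W U Δ, r = gadR A (p A)) := by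
  simp only [pinD, Finset.mem_insert, Finset.mem_union, Finset.mem_image]
  constructor
  · rintro (h | ((⟨A, hA, hAr⟩ | ⟨A, hA, hAr⟩) | ⟨A, hA, hAr⟩))
    · exact Or.inl h
    · exact Or.inr (Or.inl ⟨A, hA, hAr.symm⟩)
    · exact Or.inr (Or.inr (Or.inl ⟨A, hA, hAr.symm⟩))
    · exact Or.inr (Or.inr (Or.inr ⟨A, hA, hAr.symm⟩))
  · rintro (h | ⟨A, hA, hAr⟩ | ⟨A, hA, hAr⟩ | ⟨A, hA, hAr⟩)
    · exact Or.inl h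
    · exact Or.inr (Or.inl (Or.inl ⟨A, hA, hAr.symm⟩))
    · exact Or.inr (Or.inl (Or.inr ⟨A, hA, hAr.symm⟩))
    · exact Or.inr (Or.inr ⟨A, hA, hAr.symm⟩)

lemma factR_mem_pinD {W U Δ z p} : factR z ∈ pinD W U Δ z p :=
  mem_pinD.mpr (Or.inl rfl)

lemma factR_mem_pinD' {W U Δ z p} {A : ℕ} (h : A ∈ Tset W U Δ) :
    factR A ∈ pinD W U Δ z p := mem_pinD.mpr (Or.inr (Or.inl ⟨A, h, rfl⟩))

lemma ordR_mem_pinD {W U Δ z p} {A : ℕ} (h : A ∈ Sset W U Δ) :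
    ordR A z ∈ pinD W U Δ z p := mem_pinD.mpr (Or.inr (Or.inr (Or.inl ⟨A, h, rfl⟩)))

lemma gadR_mem_pinD {W U Δ z p} {A : ℕ} (h : A ∈ Sset W U Δ) :
    gadR A (p A) ∈ pinD W U Δ z p := mem_pinD.mpr (Or.inr (Or.inr (Or.inr ⟨A, h, rfl⟩)))

lemma mem_progAtoms_pinD {W U Δ z p} {a : ℕ} (ha : a ∈ progAtoms (pinD W U Δ z p)) :
    a = z ∨ a ∈ Tset W U Δ ∨ a ∈ Sset W U Δ ∨ ∃ A ∈ Sset W U Δ, a = p A := by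
  obtain ⟨r, hr, har⟩ := mem_progAtoms.mp ha
  rcases mem_pinD.mp hr with h | ⟨A, hA, h⟩ | ⟨A, hA, h⟩ | ⟨A, hA, h⟩ <;> subst h
  · exact Or.inl (atoms_factR.mp har)
  · exact Or.inr (Or.inl ((atoms_factR.mp har) ▸ hA))
  · rcases atoms_ordR.mp har with h | h
    · exact Or.inr (Or.inr (Or.inl (h ▸ hA)))
    · exact Or.inl h
  · rcases atoms_gadR.mp har with h | h
    · exact Or.inr (Or.inr (Or.inr ⟨A, hA, h⟩))
    · exact Or.inr (Or.inr (Or.inl (h ▸ hA)))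

end Gadget

/- ===================== properties of the pinning construction ===================== -/

section Pin

variable {W : ℕ → V} {U Δ : Finset ℕ} {z : ℕ} {p : ℕ → ℕ}

lemma extI_z {J : ℕ → V} : extI W U Δ z p J z = V.T := if_pos rfl

lemma extI_eq (hz : z ∉ U) (hp : ∀ A, p A ∉ U) {J : ℕ → V} {a : ℕ} (ha : a ∈ U) :
    extI W U Δ z p J a = J a := by
  have h1 : ¬ a = z := fun h => hz (h ▸ ha)
  have h2 : a ∉ (Sset W U Δ).image p := by
    intro hmem
    obtain ⟨A, _, hpa⟩ := Finset.mem_image.mp hmem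
    exact hp A (hpa ▸ ha)
  simp only [extI, if_neg h1, if_neg h2]

lemma extI_p (hpz : ∀ A, p A ≠ z) {J : ℕ → V} {A : ℕ} (hA : A ∈ Sset W U Δ) :
    extI W U Δ z p J (p A) = V.Fs := by
  simp only [extI, if_neg (hpz A), if_pos (Finset.mem_image_of_mem p hA)]

lemma rule_of_mem_pA (hp : ∀ A, p A ∉ U) (hpz : ∀ A, p A ≠ z)
    (hpinj : ∀ A B, p A = p B → A = B)
    {R₀ : Program} (hU : progAtoms R₀ ⊆ U) {A : ℕ} (hA : A ∈ Sset W U Δ)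
    {r : Rule} (hr : r ∈ R₀ ∪ pinD W U Δ z p) (hmem : p A ∈ r.atoms) :
    r = gadR A (p A) := by
  rcases Finset.mem_union.mp hr with h | h
  · exact absurd (hU (atoms_subset_progAtoms h hmem)) (hp A)
  · rcases mem_pinD.mp h with h1 | ⟨B, hB, h1⟩ | ⟨B, hB, h1⟩ | ⟨B, hB, h1⟩ <;> subst h1
    · exact absurd (atoms_factR.mp hmem) (hpz A)
    · exfalso
      have : p A ∈ U := by rw [atoms_factR.mp hmem]; exact (mem_Tset.mp hB).1.1
      exact hp A this
    · rcases atoms_ordR.mp hmem with h2 | h2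
      · exact absurd (by rw [h2]; exact (mem_Sset.mp hB).1.1) (hp A)
      · exact absurd h2 (hpz A)
    · rcases atoms_gadR.mp hmem with h2 | h2
      · rw [hpinj A B h2]
      · exact absurd (by rw [h2]; exact (mem_Sset.mp hB).1.1) (hp A)

lemma model_extI (hz : z ∉ U) (hp : ∀ A, p A ∉ U) (hpz : ∀ A, p A ≠ z)
    {R₀ : Program} (hU : progAtoms R₀ ⊆ U) {J : ℕ → V}
    (hJ : isModel J R₀) (hT : ∀ A ∈ Tset W U Δ, J A = V.T)
    (hS : ∀ A ∈ Sset W U Δ, J A = V.Fs) :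
    isModel (extI W U Δ z p J) (R₀ ∪ pinD W U Δ z p) := by
  rw [isModel_union]
  constructor
  · exact (isModel_congr (fun a ha => extI_eq hz hp (hU ha))).mpr hJ
  · intro r hr
    rcases mem_pinD.mp hr with h1 | ⟨A, hA, h1⟩ | ⟨A, hA, h1⟩ | ⟨A, hA, h1⟩ <;> subst h1
    · rw [sat_factR]; exact extI_z
    · rw [sat_factR, extI_eq hz hp (mem_Tset.mp hA).1.1]; exact hT A hA
    · rw [sat_ordR]
      exact Or.inl ⟨by rw [extI_eq hz hp (mem_Sset.mp hA).1.1]; exact hS A hA, extI_z⟩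
    · rw [sat_gadR]
      refine Or.inr (Or.inl ⟨extI_p hpz hA, Or.inr ?_⟩)
      rw [extI_eq hz hp (mem_Sset.mp hA).1.1]; exact hS A hA

lemma forced_values (hp : ∀ A, p A ∉ U) (hpz : ∀ A, p A ≠ z)
    (hpinj : ∀ A B, p A = p B → A = B)
    {R₀ : Program} (hU : progAtoms R₀ ⊆ U) {N : ℕ → V}
    (hN : answerSet (R₀ ∪ pinD W U Δ z p) N) :
    N z = V.T ∧ (∀ A ∈ Tset W U Δ, N A = V.T) ∧
      (∀ A ∈ Sset W U Δ, N A = V.Fs ∧ N (p A) = V.Fs) := by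
  have hz' : N z = V.T :=
    sat_factR.mp (hN.1 _ (Finset.mem_union_right _ factR_mem_pinD))
  have hT : ∀ A ∈ Tset W U Δ, N A = V.T := fun A hA =>
    sat_factR.mp (hN.1 _ (Finset.mem_union_right _ (factR_mem_pinD' hA)))
  have hnoT : ∀ A ∈ Sset W U Δ, N (p A) ≠ V.T := by
    intro A hA hT'
    have hgmem : gadR A (p A) ∈ R₀ ∪ pinD W U Δ z p :=
      Finset.mem_union_right _ (gadR_mem_pinD hA)
    have hm' : isModel (Function.update N (p A) V.Ts) (R₀ ∪ pinD W U Δ z p) := by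
      intro r hr
      by_cases hmem : p A ∈ r.atoms
      · rw [rule_of_mem_pA hp hpz hpinj hU hA hr hmem, sat_gadR]
        refine Or.inr (Or.inr (Or.inl ?_))
        simp [Function.update_self]
      · have hagree : ∀ b ∈ r.atoms, N b = Function.update N (p A) V.Ts b :=
          fun b hb => (Function.update_of_ne (fun h => hmem (by rw [← h]; exact hb)) _ _).symm
        exact (Rule.sat_congr hagree).mp (hN.1 r hr)
    have hle : interpLe (R₀ ∪ pinD W U Δ z p) (Function.update N (p A) V.Ts) N := by
      intro b _
      by_cases hpb : b = p A
      · subst hpb; rw [Function.update_self, hT']; exact V.pre_Ts_T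
      · rw [Function.update_of_ne hpb]; exact V.pre_refl _
    have hmm := hN.2.2 _ hm' hle (p A)
      (atoms_subset_progAtoms hgmem (atoms_gadR.mpr (Or.inl rfl)))
    rw [Function.update_self, hT'] at hmm
    exact V.not_pre_T_Ts hmm
  refine ⟨hz', hT, ?_⟩
  intro A hA
  have hordmem : ordR A z ∈ R₀ ∪ pinD W U Δ z p :=
    Finset.mem_union_right _ (ordR_mem_pinD hA)
  have hgmem : gadR A (p A) ∈ R₀ ∪ pinD W U Δ z p :=
    Finset.mem_union_right _ (gadR_mem_pinD hA)
  have hsolidp : N (p A) ≠ V.Ts :=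
    hN.2.1 (p A) (atoms_subset_progAtoms hgmem (atoms_gadR.mpr (Or.inl rfl)))
  have hAv : N A = V.Fs := by
    rcases sat_ordR.mp (hN.1 _ hordmem) with ⟨h1, _⟩ | h1
    · exact h1
    · exfalso
      rcases sat_gadR.mp (hN.1 _ hgmem) with ⟨_, ha⟩ | ⟨_, ha⟩ | hq | hq
      · rw [h1] at ha; exact absurd ha (by decide)
      · rw [h1] at ha; rcases ha with h | h <;> exact absurd h (by decide)
      · exact hsolidp hq
      · exact hnoT A hA hq
  refine ⟨hAv, ?_⟩
  rcases sat_gadR.mp (hN.1 _ hgmem) with ⟨_, ha⟩ | ⟨hq, _⟩ | hq | hq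
  · rw [hAv] at ha; exact absurd ha (by decide)
  · exact hq
  · exact absurd hq hsolidp
  · exact absurd hq (hnoT A hA)

end Pin

section Core

variable {W : ℕ → V} {U Δ : Finset ℕ} {z : ℕ} {p : ℕ → ℕ}

lemma mem_fstars {P : Program} {M : ℕ → V} {a : ℕ} :
    a ∈ fstars P M ↔ a ∈ progAtoms P ∧ M a = V.Fs := by
  simp [fstars, Finset.mem_filter]

lemma core (hz : z ∉ U) (hp : ∀ A, p A ∉ U) (hpz : ∀ A, p A ≠ z)
    (hpinj : ∀ A B, p A = p B → A = B)
    {R₀ : Program} (hU : progAtoms R₀ ⊆ U)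
    (hmodel : isModel W R₀)
    (hsolid : ∀ a ∈ progAtoms R₀, W a ≠ V.Ts)
    (hΔ : ∀ a ∈ progAtoms R₀, W a = V.Fs → a ∉ Δ)
    (hcov : ∀ N, isModel N (R₀ ∪ pinD W U Δ z p) →
        interpLe (R₀ ∪ pinD W U Δ z p) N (extI W U Δ z p W) →
        ∀ a ∈ progAtoms R₀, V.pre (W a) (N a)) :
    mostPreferred (R₀ ∪ pinD W U Δ z p) (extI W U Δ z p W) := by
  have hTW : ∀ A ∈ Tset W U Δ, W A = V.T := fun A hA => (mem_Tset.mp hA).2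
  have hSW : ∀ A ∈ Sset W U Δ, W A = V.Fs := fun A hA => (mem_Sset.mp hA).2
  have hmodel' : isModel (extI W U Δ z p W) (R₀ ∪ pinD W U Δ z p) :=
    model_extI hz hp hpz hU hmodel hTW hSW
  have hWa : ∀ a ∈ U, extI W U Δ z p W a = W a := fun a ha => extI_eq hz hp ha
  have hsolid' : solid (R₀ ∪ pinD W U Δ z p) (extI W U Δ z p W) := by
    intro a ha
    rw [progAtoms_union] at ha
    rcases Finset.mem_union.mp ha with h | h
    · rw [hWa a (hU h)]; exact hsolid a h
    · rcases mem_progAtoms_pinD h with h1 | h1 | h1 | ⟨A, hA, h1⟩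
      · subst h1; rw [extI_z]; decide
      · rw [hWa a (mem_Tset.mp h1).1.1, (mem_Tset.mp h1).2]; decide
      · rw [hWa a (mem_Sset.mp h1).1.1, (mem_Sset.mp h1).2]; decide
      · subst h1; rw [extI_p hpz hA]; decide
  have hmin : ∀ N, isModel N (R₀ ∪ pinD W U Δ z p) →
      interpLe (R₀ ∪ pinD W U Δ z p) N (extI W U Δ z p W) →
      interpLe (R₀ ∪ pinD W U Δ z p) (extI W U Δ z p W) N := by
    intro N hNm hNle
    have hNz : N z = V.T :=
      sat_factR.mp (hNm _ (Finset.mem_union_right _ factR_mem_pinD))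
    have hSforce : ∀ A ∈ Sset W U Δ, N A = V.Fs := by
      intro A hA
      have hmemA : A ∈ progAtoms (R₀ ∪ pinD W U Δ z p) :=
        atoms_subset_progAtoms (Finset.mem_union_right _ (ordR_mem_pinD hA))
          (atoms_ordR.mpr (Or.inl rfl))
      have h1 := hNle A hmemA
      rw [hWa A (mem_Sset.mp hA).1.1, (mem_Sset.mp hA).2] at h1
      rcases sat_ordR.mp (hNm _ (Finset.mem_union_right _ (ordR_mem_pinD hA))) with
        ⟨h2, _⟩ | h2
      · exact h2
      · exfalso
        rcases (V.pre_Fs_iff (N A)).mp h1 with h3 | h3 <;> rw [h2] at h3 <;>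
          exact absurd h3 (by decide)
    intro a ha
    have ha' : a ∈ progAtoms R₀ ∪ progAtoms (pinD W U Δ z p) := by
      rw [← progAtoms_union]; exact ha
    rcases Finset.mem_union.mp ha' with h | h
    · rw [hWa a (hU h)]; exact hcov N hNm hNle a h
    · rcases mem_progAtoms_pinD h with h1 | h1 | h1 | ⟨A, hA, h1⟩
      · subst h1; rw [extI_z, hNz]; exact V.pre_refl _
      · have : N a = V.T :=
          sat_factR.mp (hNm _ (Finset.mem_union_right _ (factR_mem_pinD' h1)))
        rw [hWa a (mem_Tset.mp h1).1.1, (mem_Tset.mp h1).2, this]; exact V.pre_refl _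
      · rw [hWa a (mem_Sset.mp h1).1.1, (mem_Sset.mp h1).2, hSforce a h1]
        exact V.pre_refl _
      · subst h1
        have hpre := hNle (p A)
          (atoms_subset_progAtoms (Finset.mem_union_right _ (gadR_mem_pinD hA))
            (atoms_gadR.mpr (Or.inl rfl)))
        rw [extI_p hpz hA] at hpre
        have hNA : N A = V.Fs := hSforce A hA
        rw [extI_p hpz hA]
        rcases sat_gadR.mp (hNm _ (Finset.mem_union_right _ (gadR_mem_pinD hA))) with
          ⟨hq, hNa⟩ | ⟨hq, _⟩ | hq | hq
        · rw [hNA] at hNa; exact absurd hNa (by decide)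
        · rw [hq]; exact V.pre_refl _
        · exfalso
          rcases (V.pre_Fs_iff _).mp hpre with h3 | h3 <;> rw [hq] at h3 <;>
            exact absurd h3 (by decide)
        · exfalso
          rcases (V.pre_Fs_iff _).mp hpre with h3 | h3 <;> rw [hq] at h3 <;>
            exact absurd h3 (by decide)
  refine ⟨⟨hmodel', hsolid', hmin⟩, ?_⟩
  intro N hNas hss
  have hforce := forced_values hp hpz hpinj hU hNas
  have hsub : fstars (R₀ ∪ pinD W U Δ z p) (extI W U Δ z p W) ⊆
      fstars (R₀ ∪ pinD W U Δ z p) N := by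
    intro a hafs
    obtain ⟨haP, haFs⟩ := mem_fstars.mp hafs
    refine mem_fstars.mpr ⟨haP, ?_⟩
    have haP' : a ∈ progAtoms R₀ ∪ progAtoms (pinD W U Δ z p) := by
      rw [← progAtoms_union]; exact haP
    rcases Finset.mem_union.mp haP' with h | h
    · have haU := hU h
      have hWaFs : W a = V.Fs := by rw [← hWa a haU]; exact haFs
      have hmem : a ∈ Sset W U Δ := mem_Sset.mpr ⟨⟨haU, hΔ a h hWaFs⟩, hWaFs⟩
      exact (hforce.2.2 a hmem).1
    · rcases mem_progAtoms_pinD h with h1 | h1 | h1 | ⟨A, hA, h1⟩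
      · subst h1; rw [extI_z] at haFs; exact absurd haFs (by decide)
      · rw [hWa a (mem_Tset.mp h1).1.1, (mem_Tset.mp h1).2] at haFs
        exact absurd haFs (by decide)
      · exact (hforce.2.2 a h1).1
      · subst h1; exact (hforce.2.2 A hA).2
  obtain ⟨hle, hne⟩ := Finset.ssubset_iff_subset_ne.mp hss
  exact hne (Finset.Subset.antisymm hle hsub)

lemma extract_model_solid (hz : z ∉ U) (hp : ∀ A, p A ∉ U)
    {R₂ : Program} (hU2 : progAtoms R₂ ⊆ U)
    (hAS : answerSet (R₂ ∪ pinD W U Δ z p) (extI W U Δ z p W)) :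
    isModel W R₂ ∧ ∀ a ∈ progAtoms R₂, W a ≠ V.Ts := by
  constructor
  · have h1 := (isModel_union.mp hAS.1).1
    exact (isModel_congr (fun a ha => (extI_eq hz hp (hU2 ha)))).mp h1
  · intro a ha
    have h1 := hAS.2.1 a (by rw [progAtoms_union]; exact Finset.mem_union_left _ ha)
    rwa [extI_eq hz hp (hU2 ha)] at h1

lemma extract (hz : z ∉ U) (hp : ∀ A, p A ∉ U) (hpz : ∀ A, p A ≠ z)
    {R₂ : Program} (hU2 : progAtoms R₂ ⊆ U)
    (hAS : answerSet (R₂ ∪ pinD W U Δ z p) (extI W U Δ z p W))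
    {N' : ℕ → V} (hN' : isModel N' R₂)
    (hagree : ∀ a ∈ U, a ∉ Δ → N' a = W a)
    (hpre : ∀ a ∈ U, V.pre (N' a) (W a)) :
    ∀ a ∈ progAtoms R₂, V.pre (W a) (N' a) := by
  have hTN : ∀ A ∈ Tset W U Δ, N' A = V.T := fun A hA => by
    rw [hagree A (mem_Tset.mp hA).1.1 (mem_Tset.mp hA).1.2]; exact (mem_Tset.mp hA).2
  have hSN : ∀ A ∈ Sset W U Δ, N' A = V.Fs := fun A hA => by
    rw [hagree A (mem_Sset.mp hA).1.1 (mem_Sset.mp hA).1.2]; exact (mem_Sset.mp hA).2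
  have hm' : isModel (extI W U Δ z p N') (R₂ ∪ pinD W U Δ z p) :=
    model_extI hz hp hpz hU2 hN' hTN hSN
  have hle : interpLe (R₂ ∪ pinD W U Δ z p) (extI W U Δ z p N') (extI W U Δ z p W) := by
    intro a ha
    by_cases h1 : a = z
    · subst h1; rw [extI_z, extI_z]; exact V.pre_refl _
    · by_cases h2 : a ∈ (Sset W U Δ).image p
      · simp only [extI, if_neg h1, if_pos h2]; exact V.pre_refl _
      · have haU : a ∈ U := by
          have ha' : a ∈ progAtoms R₂ ∪ progAtoms (pinD W U Δ z p) := by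
            rw [← progAtoms_union]; exact ha
          rcases Finset.mem_union.mp ha' with h | h
          · exact hU2 h
          · rcases mem_progAtoms_pinD h with hh | hh | hh | ⟨A, hA, hh⟩
            · exact absurd hh h1
            · exact (mem_Tset.mp hh).1.1
            · exact (mem_Sset.mp hh).1.1
            · exact absurd (hh ▸ Finset.mem_image_of_mem p hA) h2
        simp only [extI, if_neg h1, if_neg h2]
        exact hpre a haU
  intro a ha
  have hamem : a ∈ progAtoms (R₂ ∪ pinD W U Δ z p) := by
    rw [progAtoms_union]; exact Finset.mem_union_left _ ha
  have h2 := hAS.2.2 _ hm' hle a hamem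
  rwa [extI_eq hz hp (hU2 ha), extI_eq hz hp (hU2 ha)] at h2

end Core

/- ===================== assembly ===================== -/

section Assembly

lemma fresh_exists (U : Finset ℕ) :
    ∃ (z : ℕ) (p : ℕ → ℕ), z ∉ U ∧ (∀ A, p A ∉ U) ∧ (∀ A, p A ≠ z) ∧
      (∀ A B, p A = p B → A = B) := by
  refine ⟨U.sup id + 1, fun A => U.sup id + 2 + A, ?_, ?_, ?_, ?_⟩
  · intro h
    have h2 := Finset.le_sup (f := id) (b := U.sup id + 1) h
    simp only [id_eq] at h2
    omega
  · intro A h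
    have h2 := Finset.le_sup (f := id) (b := U.sup id + 2 + A) h
    simp only [id_eq] at h2
    omega
  · intro A
    show U.sup id + 2 + A ≠ U.sup id + 1
    omega
  · intro A B hAB
    have h2 : U.sup id + 2 + A = U.sup id + 2 + B := hAB
    omega

lemma step2core {P1 P2 : Program} (h : seMost P1 P2) (P : Program) (M : ℕ → V)
    (hM : answerSet (P1 ∪ P) M)
    {U : Finset ℕ} (hU1 : progAtoms (P1 ∪ P) ⊆ U) (hU2 : progAtoms (P2 ∪ P) ⊆ U)
    {z : ℕ} {p : ℕ → ℕ}
    (hz : z ∉ U) (hp : ∀ A, p A ∉ U) (hpz : ∀ A, p A ≠ z)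
    (hpinj : ∀ A B, p A = p B → A = B)
    (N' : ℕ → V) (Δ : Finset ℕ)
    (hN' : isModel N' (P2 ∪ P))
    (hagree : ∀ a ∈ U, a ∉ Δ → N' a = M a)
    (hpre : ∀ a ∈ U, V.pre (N' a) (M a))
    (hΔ : ∀ a ∈ progAtoms (P1 ∪ P), M a = V.Fs → a ∉ Δ)
    (A₀ : ℕ) (hA₀B : A₀ ∈ progAtoms (P2 ∪ P)) (hA₀ : ¬ V.pre (M A₀) (N' A₀)) :
    False := by
  have hcov : ∀ N, isModel N ((P1 ∪ P) ∪ pinD M U Δ z p) →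
      interpLe ((P1 ∪ P) ∪ pinD M U Δ z p) N (extI M U Δ z p M) →
      ∀ a ∈ progAtoms (P1 ∪ P), V.pre (M a) (N a) := by
    intro N hNm hNle
    refine hM.2.2 N ((isModel_union.mp hNm).1) ?_
    intro b hb
    have h1 := hNle b (by rw [progAtoms_union]; exact Finset.mem_union_left _ hb)
    rwa [extI_eq hz hp (hU1 hb)] at h1
  have hcore := core hz hp hpz hpinj hU1 hM.1 hM.2.1 hΔ hcov
  have htrans := h (P ∪ pinD M U Δ z p) (extI M U Δ z p M)
  rw [← Finset.union_assoc, ← Finset.union_assoc] at htrans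
  have hAS2 : answerSet ((P2 ∪ P) ∪ pinD M U Δ z p) (extI M U Δ z p M) :=
    (htrans.mp hcore).1
  have hex := extract hz hp hpz hU2 hAS2 hN' hagree hpre A₀ hA₀B
  exact hA₀ hex

lemma hardDir {P1 P2 : Program} (h : seMost P1 P2) (P : Program) (M : ℕ → V)
    (hM : answerSet (P1 ∪ P) M) : answerSet (P2 ∪ P) M := by
  classical
  obtain ⟨z, p, hz, hp, hpz, hpinj⟩ := fresh_exists (progAtoms (P1 ∪ P2 ∪ P))
  set U := progAtoms (P1 ∪ P2 ∪ P) with hUdef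
  have hU1 : progAtoms (P1 ∪ P) ⊆ U := by
    rw [hUdef, progAtoms_union, progAtoms_union, progAtoms_union]
    intro a ha
    rcases Finset.mem_union.mp ha with h1 | h1
    · exact Finset.mem_union_left _ (Finset.mem_union_left _ h1)
    · exact Finset.mem_union_right _ h1
  have hU2 : progAtoms (P2 ∪ P) ⊆ U := by
    rw [hUdef, progAtoms_union, progAtoms_union, progAtoms_union]
    intro a ha
    rcases Finset.mem_union.mp ha with h1 | h1
    · exact Finset.mem_union_left _ (Finset.mem_union_right _ h1)
    · exact Finset.mem_union_right _ h1
  have hUsub : ∀ a ∈ U, a ∈ progAtoms (P1 ∪ P) ∨ a ∈ progAtoms (P2 ∪ P) := by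
    intro a ha
    rw [hUdef, progAtoms_union, progAtoms_union] at ha
    rcases Finset.mem_union.mp ha with h1 | h1
    · rcases Finset.mem_union.mp h1 with h2 | h2
      · exact Or.inl (by rw [progAtoms_union]; exact Finset.mem_union_left _ h2)
      · exact Or.inr (by rw [progAtoms_union]; exact Finset.mem_union_left _ h2)
    · exact Or.inl (by rw [progAtoms_union]; exact Finset.mem_union_right _ h1)
  -- Step 1 : M is a model of P2 ∪ P and solid for it
  have step1 : isModel M (P2 ∪ P) ∧ ∀ a ∈ progAtoms (P2 ∪ P), M a ≠ V.Ts := by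
    have hcov : ∀ N, isModel N ((P1 ∪ P) ∪ pinD M U ∅ z p) →
        interpLe ((P1 ∪ P) ∪ pinD M U ∅ z p) N (extI M U ∅ z p M) →
        ∀ a ∈ progAtoms (P1 ∪ P), V.pre (M a) (N a) := by
      intro N hNm hNle
      refine hM.2.2 N ((isModel_union.mp hNm).1) ?_
      intro b hb
      have h1 := hNle b (by rw [progAtoms_union]; exact Finset.mem_union_left _ hb)
      rwa [extI_eq hz hp (hU1 hb)] at h1
    have hcore := core hz hp hpz hpinj hU1 hM.1 hM.2.1
      (fun a _ _ => Finset.notMem_empty a) hcov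
    have htrans := h (P ∪ pinD M U ∅ z p) (extI M U ∅ z p M)
    rw [← Finset.union_assoc, ← Finset.union_assoc] at htrans
    exact extract_model_solid hz hp hU2 (htrans.mp hcore).1
  refine ⟨step1.1, step1.2, ?_⟩
  intro N₀ hN₀ hle₀
  by_contra hnot
  have hwit : ∃ a ∈ progAtoms (P2 ∪ P), ¬ V.pre (M a) (N₀ a) := by
    by_contra hall
    push_neg at hall
    exact hnot (fun a ha => hall a ha)
  obtain ⟨A₀, hA₀B, hA₀⟩ := hwit
  -- the two candidate counterexample interpretations
  set Ntil : ℕ → V := fun a => if a ∈ progAtoms (P2 ∪ P) then N₀ a else M a with hNtil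
  set N1 : ℕ → V := fun a => if a ∈ progAtoms (P2 ∪ P) then gg (N₀ a) else M a with hN1
  have hNtil_model : isModel Ntil (P2 ∪ P) :=
    (isModel_congr (fun a ha => by simp only [hNtil, if_pos ha])).mpr hN₀
  have hN1_model : isModel N1 (P2 ∪ P) := by
    have hgm := isModel_gg hNtil_model
    refine (isModel_congr (fun a ha => ?_)).mp hgm
    simp only [hNtil, hN1, if_pos ha]
  have hpre1 : ∀ a ∈ U, V.pre (N1 a) (M a) := by
    intro a _
    by_cases hB : a ∈ progAtoms (P2 ∪ P)
    · simp only [hN1, if_pos hB]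
      exact pre_gg_left _ _ (hle₀ a hB) (step1.2 a hB)
    · simp only [hN1, if_neg hB]; exact V.pre_refl _
  by_cases hc : ∀ a ∈ progAtoms (P2 ∪ P), V.pre (M a) (N1 a)
  · -- Case Ts : all remaining violations are of type (T, Ts)
    have hN1M : ∀ a ∈ progAtoms (P2 ∪ P), N1 a = M a := fun a ha =>
      V.pre_antisymm _ _ (hpre1 a (hU2 ha)) (hc a ha)
    set Δ := (progAtoms (P2 ∪ P)).filter (fun a => Ntil a ≠ M a) with hΔdef
    have hΔprop : ∀ a ∈ Δ, N₀ a = V.Ts ∧ M a = V.T := by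
      intro a haΔ
      obtain ⟨haB, hne⟩ := Finset.mem_filter.mp haΔ
      have h1 : gg (N₀ a) = M a := by
        have := hN1M a haB; simpa only [hN1, if_pos haB] using this
      have h2 : N₀ a ≠ M a := by simpa only [hNtil, if_pos haB] using hne
      exact gg_cases _ _ h1 h2
    refine step2core h P M hM hU1 hU2 hz hp hpz hpinj Ntil Δ hNtil_model ?_ ?_ ?_ A₀ hA₀B ?_
    · intro a haU haΔ
      by_cases hB : a ∈ progAtoms (P2 ∪ P)
      · simp only [hNtil, if_pos hB]
        by_contra hne
        exact haΔ (Finset.mem_filter.mpr ⟨hB, by simpa only [hNtil, if_pos hB] using hne⟩)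
      · simp only [hNtil, if_neg hB]
    · intro a _
      by_cases hB : a ∈ progAtoms (P2 ∪ P)
      · simp only [hNtil, if_pos hB]; exact hle₀ a hB
      · simp only [hNtil, if_neg hB]; exact V.pre_refl _
    · intro a ha hFs haΔ
      exact absurd hFs (by rw [(hΔprop a haΔ).2]; decide)
    · simp only [hNtil, if_pos hA₀B]; exact hA₀
  · -- Case F : there is a Ts-free counterexample
    push_neg at hc
    obtain ⟨A₁, hA₁B, hA₁⟩ := hc
    have hN1solidU : ∀ a ∈ U, N1 a ≠ V.Ts := by
      intro a ha
      by_cases hB : a ∈ progAtoms (P2 ∪ P)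
      · simp only [hN1, if_pos hB]; exact gg_ne_Ts _
      · simp only [hN1, if_neg hB]
        rcases hUsub a ha with h1 | h1
        · exact hM.2.1 a h1
        · exact absurd h1 hB
    -- construction 1 centred at N1, from the side of P2
    have hmodel1 : isModel N1 (P1 ∪ P) := by
      have hcov2 : ∀ N, isModel N ((P2 ∪ P) ∪ pinD N1 U ∅ z p) →
          interpLe ((P2 ∪ P) ∪ pinD N1 U ∅ z p) N (extI N1 U ∅ z p N1) →
          ∀ a ∈ progAtoms (P2 ∪ P), V.pre (N1 a) (N a) := by
        intro N hNm hNle a ha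
        have haU : a ∈ U := hU2 ha
        have hNz : N z = V.T :=
          sat_factR.mp (hNm _ (Finset.mem_union_right _ factR_mem_pinD))
        have hv : N1 a = V.F ∨ N1 a = V.Fs ∨ N1 a = V.T := by
          have := hN1solidU a haU
          cases hh : N1 a
          · exact Or.inl rfl
          · exact Or.inr (Or.inl rfl)
          · exact absurd hh this
          · exact Or.inr (Or.inr rfl)
        rcases hv with hv | hv | hv
        · rw [hv]; exact V.pre_F _
        · have hmemS : a ∈ Sset N1 U ∅ := mem_Sset.mpr ⟨⟨haU, Finset.notMem_empty a⟩, hv⟩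
          have h1 := hNle a (by
            rw [progAtoms_union]; exact Finset.mem_union_left _ ha)
          rw [extI_eq hz hp haU, hv] at h1
          rcases sat_ordR.mp (hNm _ (Finset.mem_union_right _ (ordR_mem_pinD hmemS))) with
            ⟨h2, _⟩ | h2
          · rw [hv, h2]; exact V.pre_refl _
          · exfalso
            rcases (V.pre_Fs_iff _).mp h1 with h3 | h3 <;> rw [h2] at h3 <;>
              exact absurd h3 (by decide)
        · have hmemT : a ∈ Tset N1 U ∅ := mem_Tset.mpr ⟨⟨haU, Finset.notMem_empty a⟩, hv⟩
          have : N a = V.T :=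
            sat_factR.mp (hNm _ (Finset.mem_union_right _ (factR_mem_pinD' hmemT)))
          rw [hv, this]; exact V.pre_refl _
      have hcore2 := core hz hp hpz hpinj hU2 hN1_model
        (fun a ha => hN1solidU a (hU2 ha)) (fun a _ _ => Finset.notMem_empty a) hcov2
      have htrans2 := h (P ∪ pinD N1 U ∅ z p) (extI N1 U ∅ z p N1)
      rw [← Finset.union_assoc, ← Finset.union_assoc] at htrans2
      have hAS1 := (htrans2.mpr hcore2).1
      have hm := (isModel_union.mp hAS1.1).1
      exact (isModel_congr (fun a ha => extI_eq hz hp (hU1 ha))).mp hm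
    have hN1eqM : ∀ a ∈ progAtoms (P1 ∪ P), N1 a = M a := by
      have hle : interpLe (P1 ∪ P) N1 M := fun a ha => hpre1 a (hU1 ha)
      have hge := hM.2.2 N1 hmodel1 hle
      exact fun a ha => V.pre_antisymm _ _ (hle a ha) (hge a ha)
    set Δ := (progAtoms (P2 ∪ P)).filter (fun a => N1 a ≠ M a) with hΔdef
    refine step2core h P M hM hU1 hU2 hz hp hpz hpinj N1 Δ hN1_model ?_ hpre1 ?_ A₁ hA₁B hA₁
    · intro a haU haΔ
      by_cases hB : a ∈ progAtoms (P2 ∪ P)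
      · by_contra hne
        exact haΔ (Finset.mem_filter.mpr ⟨hB, hne⟩)
      · simp only [hN1, if_neg hB]
    · intro a ha hFs haΔ
      obtain ⟨haB, hne⟩ := Finset.mem_filter.mp haΔ
      exact hne (hN1eqM a ha)

end Assembly

/- ===================== the easy direction ===================== -/

section Easy

lemma fstars_sub {P1 P2 : Program}
    (h12 : ∀ P M, answerSet (P1 ∪ P) M → answerSet (P2 ∪ P) M)
    (h21 : ∀ P M, answerSet (P2 ∪ P) M → answerSet (P1 ∪ P) M)
    (P : Program) (M : ℕ → V) (hM1 : answerSet (P1 ∪ P) M) :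
    fstars (P1 ∪ P) M ⊆ fstars (P2 ∪ P) M := by
  intro a ha
  obtain ⟨haU, haFs⟩ := mem_fstars.mp ha
  refine mem_fstars.mpr ⟨?_, haFs⟩
  by_contra hnB
  have hM2 : answerSet (P2 ∪ P) M := h12 P M hM1
  have hM0AS : answerSet (P2 ∪ P) (Function.update M a V.F) := by
    have hupd : ∀ b ∈ progAtoms (P2 ∪ P), M b = Function.update M a V.F b :=
      fun b hb => (Function.update_of_ne (fun hba => hnB (by rw [← hba]; exact hb)) _ _).symm
    refine ⟨(isModel_congr hupd).mp hM2.1, ?_, ?_⟩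
    · intro b hb
      rw [← hupd b hb]; exact hM2.2.1 b hb
    · intro N hN hle
      have hle' : interpLe (P2 ∪ P) N M := by
        intro b hb; rw [hupd b hb]; exact hle b hb
      intro b hb
      rw [← hupd b hb]
      exact hM2.2.2 N hN hle' b hb
  have hM0AS1 : answerSet (P1 ∪ P) (Function.update M a V.F) := h21 P _ hM0AS
  have hle : interpLe (P1 ∪ P) (Function.update M a V.F) M := by
    intro b hb
    by_cases hba : b = a
    · subst hba; rw [Function.update_self]; exact V.pre_F _
    · rw [Function.update_of_ne hba]; exact V.pre_refl _
  have hmm := hM1.2.2 _ hM0AS1.1 hle a haU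
  rw [Function.update_self, haFs] at hmm
  exact V.not_pre_Fs_F hmm

lemma easyDir {P1 P2 : Program} (h : seAll P1 P2) : seMost P1 P2 := by
  intro P M
  have h12 : ∀ P M, answerSet (P1 ∪ P) M → answerSet (P2 ∪ P) M :=
    fun P M hm => (h P M).mp hm
  have h21 : ∀ P M, answerSet (P2 ∪ P) M → answerSet (P1 ∪ P) M :=
    fun P M hm => (h P M).mpr hm
  have hfs : ∀ N, answerSet (P1 ∪ P) N → fstars (P1 ∪ P) N = fstars (P2 ∪ P) N := by
    intro N hN
    exact Finset.Subset.antisymm (fstars_sub h12 h21 P N hN)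
      (fstars_sub h21 h12 P N (h12 P N hN))
  constructor
  · rintro ⟨hN, hpref⟩
    refine ⟨h12 P M hN, ?_⟩
    intro N hN2 hss
    have hN1 := h21 P N hN2
    have hp := hpref N hN1
    rw [hfs N hN1, hfs M hN] at hp
    exact hp hss
  · rintro ⟨hN, hpref⟩
    have hN1 := h21 P M hN
    refine ⟨hN1, ?_⟩
    intro N hN2 hss
    have hp := hpref N (h12 P N hN2)
    rw [← hfs N hN2, ← hfs M hN1] at hp
    exact hp hss

end Easy

/-- strong equivalence under the most-preferred answer sets coincides
with strong equivalence under all the answer sets. -/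
theorem seMost_iff_seAll (P1 P2 : Program) :
    seMost P1 P2 ↔ seAll P1 P2 := by
  constructor
  · intro h P M
    have hsymm : seMost P2 P1 := fun Q N => (h Q N).symm
    exact ⟨fun hm => hardDir h P M hm, fun hm => hardDir hsymm P M hm⟩
  · exact easyDir
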